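/- Let d ≥ 2 be an integer and s > 1 a real number. Let X and Y be independent random variables on a probability space, where X has the standard Gaussian distribution N(0,1) and Y has the chi-square distribution with d degrees of freedom (the Gamma distribution with shape d/2 and rate 1/2). Then P( X ≥ √( Y · (s^{2/(d−1)} − 1) ) ) ≤ 1/(2 s √(log s)). -/

import Mathlib

open MeasureTheory ProbabilityTheory
open Real Set Filter
open scoped ENNReal

lemma gamma_ratio_aux (d : ℕ) (hd : 2 ≤ d) :
    Real.sqrt ((d:ℝ)-1) * Real.Gamma (((d:ℝ)-1)/2) ≤ Real.sqrt (2*Real.pi) * Real.Gamma ((d:ℝ)/2) := by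
  have hπ := Real.pi_gt_three
  have hG1 : 0 < Real.Gamma (((d:ℝ)-1)/2) := Real.Gamma_pos_of_pos (by
    have : (2:ℝ) ≤ d := by exact_mod_cast hd
    linarith)
  have hG2 : 0 < Real.Gamma ((d:ℝ)/2) := Real.Gamma_pos_of_pos (by positivity)
  have key : ((d:ℝ)-1) * Real.Gamma (((d:ℝ)-1)/2)^2 ≤ (2*Real.pi) * Real.Gamma ((d:ℝ)/2)^2 := by
    rcases eq_or_lt_of_le hd with h2 | h3
    · -- d = 2
      have : (d:ℝ) = 2 := by exact_mod_cast h2.symm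
      rw [this, show ((2:ℝ)-1)/2 = 1/2 by norm_num, show (2:ℝ)/2 = 1 by norm_num,
        Real.Gamma_one_half_eq, Real.Gamma_one, Real.sq_sqrt Real.pi_pos.le]
      nlinarith
    · -- d ≥ 3
      have hd3 : (3:ℝ) ≤ d := by exact_mod_cast h3
      set x : ℝ := ((d:ℝ)-1)/2 with hx
      have hu : (0:ℝ) < x - 1/2 := by rw [hx]; linarith
      have hx1 : (1:ℝ) ≤ x := by rw [hx]; linarith
      have hmemu : x - 1/2 ∈ Ioi (0:ℝ) := hu
      have hmemv : x + 1/2 ∈ Ioi (0:ℝ) := by simp; linarith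
      have hconv := Real.convexOn_log_Gamma.2 hmemu hmemv
        (by norm_num : (0:ℝ) ≤ 1/2) (by norm_num : (0:ℝ) ≤ 1/2) (by norm_num)
      simp only [smul_eq_mul, Function.comp] at hconv
      have hmid : (1/2 : ℝ) * (x - 1/2) + (1/2 : ℝ) * (x + 1/2) = x := by ring
      rw [hmid] at hconv
      have hGu : 0 < Real.Gamma (x - 1/2) := Real.Gamma_pos_of_pos hu
      have hGv : 0 < Real.Gamma (x + 1/2) := Real.Gamma_pos_of_pos (by linarith)
      have hGx : 0 < Real.Gamma x := Real.Gamma_pos_of_pos (by linarith)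
      have hsq : Real.Gamma x ^ 2 ≤ Real.Gamma (x - 1/2) * Real.Gamma (x + 1/2) := by
        have h2 : 2 * Real.log (Real.Gamma x) ≤
            Real.log (Real.Gamma (x - 1/2)) + Real.log (Real.Gamma (x + 1/2)) := by linarith
        have := Real.exp_le_exp.mpr h2
        rwa [Real.exp_add, Real.exp_log hGu, Real.exp_log hGv,
          show (2:ℝ) * Real.log (Real.Gamma x) = Real.log (Real.Gamma x) + Real.log (Real.Gamma x) by ring,
          Real.exp_add, Real.exp_log hGx, ← pow_two] at this
      have hrec : Real.Gamma (x + 1/2) = (x - 1/2) * Real.Gamma (x - 1/2) := by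
        have := Real.Gamma_add_one (s := x - 1/2) hu.ne'
        rw [show x - 1/2 + 1 = x + 1/2 by ring] at this
        exact this
      have hsq2 : (x - 1/2) * Real.Gamma x ^ 2 ≤ Real.Gamma (x + 1/2)^2 := by
        have : Real.Gamma (x - 1/2) = Real.Gamma (x + 1/2) / (x - 1/2) := by
          rw [eq_div_iff hu.ne', hrec]; ring
        rw [this] at hsq
        rw [div_mul_eq_mul_div, ← pow_two] at hsq
        calc (x - 1/2) * Real.Gamma x ^ 2 ≤ (x - 1/2) * (Real.Gamma (x+1/2)^2 / (x - 1/2)) := by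
              exact mul_le_mul_of_nonneg_left hsq hu.le
          _ = Real.Gamma (x+1/2)^2 := by
              rw [mul_comm]; exact div_mul_cancel₀ _ hu.ne'
      have hxv : x + 1/2 = (d:ℝ)/2 := by rw [hx]; ring
      rw [hxv] at hsq2
      nlinarith [sq_nonneg (Real.Gamma x), hsq2]
  -- convert squared inequality to sqrt form
  have h1 : (0:ℝ) ≤ (d:ℝ) - 1 := by
    have : (2:ℝ) ≤ d := by exact_mod_cast hd
    linarith
  have := Real.sqrt_le_sqrt key
  rwa [Real.sqrt_mul h1, Real.sqrt_mul (by positivity : (0:ℝ) ≤ 2*Real.pi),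
    Real.sqrt_sq hG1.le, Real.sqrt_sq hG2.le] at this

lemma integral_x_exp_tail {t : ℝ} :
    ∫ x in Ioi t, x * Real.exp (-x^2/2) = Real.exp (-t^2/2) := by
  have h := MeasureTheory.integral_Ioi_of_hasDerivAt_of_tendsto
    (f := fun x : ℝ => -Real.exp (-x^2/2)) (f' := fun x : ℝ => x * Real.exp (-x^2/2))
    (a := t) (m := 0) ?_ ?_ ?_ ?_
  · rw [h]; ring
  · -- continuity
    exact ((Real.continuous_exp.comp (by continuity : Continuous fun x : ℝ => -x^2/2)).neg).continuousWithinAt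
  · intro x hx
    have h1 : HasDerivAt (fun x : ℝ => -x^2/2) (-x) x := by
      have := ((hasDerivAt_pow 2 x).neg.div_const 2)
      simpa using this.congr_deriv (by ring)
    have h2 := (h1.exp).neg
    convert h2 using 1
    · rfl
    · ring
  · -- integrability
    have h0 : Integrable (fun x : ℝ => x * Real.exp (-(2⁻¹ : ℝ) * x^2)) :=
      integrable_mul_exp_neg_mul_sq (by norm_num)
    have : Integrable (fun x : ℝ => x * Real.exp (-x^2/2)) := by
      convert h0 using 2 with x
      ring_nf
    exact this.integrableOn
  · -- tendsto
    have h1 : Tendsto (fun x : ℝ => -x^2/2) atTop atBot := by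
      apply Tendsto.atBot_div_const (by norm_num : (0:ℝ) < 2)
      exact Filter.tendsto_neg_atTop_atBot.comp
        (tendsto_pow_atTop (by norm_num : (2:ℕ) ≠ 0))
    have := (Real.tendsto_exp_atBot.comp h1).neg
    simpa using this

lemma gauss_tail {t : ℝ} (ht : 0 < t) :
    gaussianReal 0 1 (Ici t) ≤ ENNReal.ofReal (Real.exp (-t^2/2) / (t * Real.sqrt (2*Real.pi))) := by
  rw [gaussianReal_apply_eq_integral 0 one_ne_zero]
  apply ENNReal.ofReal_le_ofReal
  have hpdf : ∀ x : ℝ, gaussianPDFReal 0 1 x = (Real.sqrt (2*Real.pi))⁻¹ * Real.exp (-x^2/2) := by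
    intro x
    simp only [gaussianPDFReal, NNReal.coe_one, mul_one, sub_zero]
  have hint2 : IntegrableOn (fun x : ℝ => (Real.sqrt (2*Real.pi))⁻¹ * t⁻¹ * (x * Real.exp (-x^2/2))) (Ici t) := by
    apply Integrable.integrableOn
    apply Integrable.const_mul
    have h0 : Integrable (fun x : ℝ => x * Real.exp (-(2⁻¹ : ℝ) * x^2)) :=
      integrable_mul_exp_neg_mul_sq (by norm_num)
    convert h0 using 2 with x
    ring_nf
  have hmono : ∫ x in Ici t, gaussianPDFReal 0 1 x
      ≤ ∫ x in Ici t, (Real.sqrt (2*Real.pi))⁻¹ * t⁻¹ * (x * Real.exp (-x^2/2)) := by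
    apply setIntegral_mono_on
    · exact (integrable_gaussianPDFReal 0 1).integrableOn
    · exact hint2
    · exact measurableSet_Ici
    · intro x hx
      rw [hpdf x]
      have hx' : t ≤ x := hx
      have h1 : 1 ≤ t⁻¹ * x := by
        rw [← div_eq_inv_mul]
        exact (one_le_div ht).mpr hx'
      have hexp : 0 < Real.exp (-x^2/2) := Real.exp_pos _
      have hs : 0 < (Real.sqrt (2*Real.pi))⁻¹ := by positivity
      calc (Real.sqrt (2*Real.pi))⁻¹ * Real.exp (-x^2/2)
          ≤ (Real.sqrt (2*Real.pi))⁻¹ * ((t⁻¹ * x) * Real.exp (-x^2/2)) := by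
            apply mul_le_mul_of_nonneg_left _ hs.le
            nlinarith
        _ = (Real.sqrt (2*Real.pi))⁻¹ * t⁻¹ * (x * Real.exp (-x^2/2)) := by ring
  refine hmono.trans (le_of_eq ?_)
  rw [integral_const_mul, integral_Ici_eq_integral_Ioi, integral_x_exp_tail]
  have h2 : (0:ℝ) < Real.sqrt (2*Real.pi) := by positivity
  field_simp

lemma pointwise_density (d : ℕ) (hd : 2 ≤ d) {a y : ℝ} (ha : 0 < a) (hy : 0 < y) :
    gammaPDFReal ((d:ℝ)/2) (1/2) y * (Real.exp (-(y*a)/2) / (Real.sqrt (y*a) * Real.sqrt (2*Real.pi)))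
    = ((Real.sqrt a * Real.sqrt (2*Real.pi))⁻¹ * ((1/2:ℝ) ^ ((d:ℝ)/2) / Real.Gamma ((d:ℝ)/2))
        * (Real.Gamma (((d:ℝ)-1)/2) * (1/((1+a)/2)) ^ (((d:ℝ)-1)/2)))
      * gammaPDFReal (((d:ℝ)-1)/2) ((1+a)/2) y := by
  have hc : (0:ℝ) < (1+a)/2 := by linarith
  have hGb : (0:ℝ) < Real.Gamma (((d:ℝ)-1)/2) := Real.Gamma_pos_of_pos (by
    have : (2:ℝ) ≤ d := by exact_mod_cast hd
    linarith)
  rw [gammaPDFReal, gammaPDFReal, if_pos hy.le, if_pos hy.le]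
  set b : ℝ := ((d:ℝ)-1)/2 with hbdef
  set c : ℝ := (1+a)/2 with hcdef
  have hcb : ((1:ℝ)/c) ^ b * c ^ b = 1 := by
    rw [← Real.mul_rpow (by positivity) hc.le, one_div_mul_cancel hc.ne', Real.one_rpow]
  have hsqrt : Real.sqrt (y*a) = y ^ ((1:ℝ)/2) * Real.sqrt a := by
    rw [Real.sqrt_mul hy.le, Real.sqrt_eq_rpow]
  have hrpow : y ^ ((d:ℝ)/2 - 1) = y ^ (b - 1) * y ^ ((1:ℝ)/2) := by
    rw [← Real.rpow_add hy, hbdef]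
    ring_nf
  have hexp : Real.exp (-(1/2*y)) * Real.exp (-(y*a)/2) = Real.exp (-(c*y)) := by
    rw [← Real.exp_add, hcdef]
    ring_nf
  have hy2 : (0:ℝ) < y ^ ((1:ℝ)/2) := Real.rpow_pos_of_pos hy _
  have hsa : (0:ℝ) < Real.sqrt a := Real.sqrt_pos.mpr ha
  have hsπ : (0:ℝ) < Real.sqrt (2*Real.pi) := Real.sqrt_pos.mpr (by positivity)
  have hGd : (0:ℝ) < Real.Gamma ((d:ℝ)/2) := Real.Gamma_pos_of_pos (by positivity)
  set A : ℝ := (Real.sqrt a * Real.sqrt (2*Real.pi))⁻¹ * ((1/2:ℝ) ^ ((d:ℝ)/2) / Real.Gamma ((d:ℝ)/2))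
    with hAdef
  have hL : (1/2:ℝ) ^ ((d:ℝ)/2) / Real.Gamma ((d:ℝ)/2) * y ^ ((d:ℝ)/2-1) * Real.exp (-(1/2*y))
      * (Real.exp (-(y*a)/2) / (Real.sqrt (y*a) * Real.sqrt (2*Real.pi)))
      = A * (y ^ (b-1) * Real.exp (-(c*y))) := by
    rw [hsqrt, hrpow, ← hexp, hAdef]
    field_simp
  have hR : (A * (Real.Gamma b * ((1:ℝ)/c) ^ b))
      * (c ^ b / Real.Gamma b * y ^ (b-1) * Real.exp (-(c*y)))
      = A * (y ^ (b-1) * Real.exp (-(c*y))) := by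
    rw [show (A * (Real.Gamma b * ((1:ℝ)/c) ^ b))
        * (c ^ b / Real.Gamma b * y ^ (b-1) * Real.exp (-(c*y)))
        = A * (y ^ (b-1) * Real.exp (-(c*y))) * ((((1:ℝ)/c) ^ b * c ^ b)
          * (Real.Gamma b / Real.Gamma b)) from by ring,
      hcb, div_self hGb.ne']
    ring
  rw [hL, ← hR, hAdef]

lemma const_bound (d : ℕ) (hd : 2 ≤ d) {s a : ℝ} (hs : 1 < s)
    (hadef : a = s ^ ((2:ℝ)/((d:ℝ)-1)) - 1) :
    (Real.sqrt a * Real.sqrt (2*Real.pi))⁻¹ * ((1/2:ℝ) ^ ((d:ℝ)/2) / Real.Gamma ((d:ℝ)/2))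
        * (Real.Gamma (((d:ℝ)-1)/2) * (1/((1+a)/2)) ^ (((d:ℝ)-1)/2))
      ≤ 1 / (2 * s * Real.sqrt (Real.log s)) := by
  have hd2 : (2:ℝ) ≤ (d:ℝ) := by exact_mod_cast hd
  have hdpos : (0:ℝ) < (d:ℝ) - 1 := by linarith
  have hspos : (0:ℝ) < s := by linarith
  have hlog : (0:ℝ) < Real.log s := Real.log_pos hs
  have hu : (0:ℝ) < 2/((d:ℝ)-1) := by positivity
  have ha : 0 < a := by
    rw [hadef, sub_pos]
    exact Real.one_lt_rpow_iff_of_pos hspos |>.mpr (Or.inl ⟨hs, hu⟩)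
  have haLB : 2 * Real.log s / ((d:ℝ)-1) ≤ a := by
    have h1 : s ^ ((2:ℝ)/((d:ℝ)-1)) = Real.exp (Real.log s * (2/((d:ℝ)-1))) :=
      Real.rpow_def_of_pos hspos _
    have h2 := Real.add_one_le_exp (Real.log s * (2/((d:ℝ)-1)))
    rw [hadef, h1]
    have : Real.log s * (2/((d:ℝ)-1)) = 2 * Real.log s / ((d:ℝ)-1) := by ring
    linarith [this ▸ h2]
  set b : ℝ := ((d:ℝ)-1)/2 with hbdef
  have hb : 0 < b := by positivity
  have hGb : (0:ℝ) < Real.Gamma b := Real.Gamma_pos_of_pos hb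
  have hGd : (0:ℝ) < Real.Gamma ((d:ℝ)/2) := Real.Gamma_pos_of_pos (by positivity)
  set G : ℝ := Real.Gamma ((d:ℝ)/2) with hGdef
  have h1pa : 1 + a = s ^ ((2:ℝ)/((d:ℝ)-1)) := by rw [hadef]; ring
  have hpow_s : (1+a) ^ b = s := by
    rw [h1pa, ← Real.rpow_mul hspos.le,
      show (2:ℝ)/((d:ℝ)-1) * b = 1 from by rw [hbdef]; field_simp, Real.rpow_one]
  have h2 : ((1:ℝ)/((1+a)/2)) ^ b = 2 ^ b / s := by
    rw [show (1:ℝ)/((1+a)/2) = 2/(1+a) by field_simp]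
    rw [Real.div_rpow (by norm_num) (by linarith), hpow_s]
  have h3 : (1/2:ℝ) ^ ((d:ℝ)/2) * 2 ^ b = (Real.sqrt 2)⁻¹ := by
    rw [one_div, Real.inv_rpow (by norm_num : (0:ℝ) ≤ 2),
      ← Real.rpow_neg (by norm_num : (0:ℝ) ≤ 2),
      ← Real.rpow_add (by norm_num : (0:ℝ) < 2),
      show -((d:ℝ)/2) + b = -(1/2 : ℝ) from by rw [hbdef]; ring,
      Real.rpow_neg (by norm_num : (0:ℝ) ≤ 2), ← Real.sqrt_eq_rpow]
  have h2π : Real.sqrt (2*Real.pi) = Real.sqrt 2 * Real.sqrt Real.pi :=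
    Real.sqrt_mul (by norm_num) _
  have h22 : Real.sqrt 2 * Real.sqrt 2 = 2 := Real.mul_self_sqrt (by norm_num)
  have hsa : (0:ℝ) < Real.sqrt a := Real.sqrt_pos.mpr ha
  have hsπ : (0:ℝ) < Real.sqrt Real.pi := Real.sqrt_pos.mpr Real.pi_pos
  have hs2 : (0:ℝ) < Real.sqrt 2 := by positivity
  have hslog : (0:ℝ) < Real.sqrt (Real.log s) := Real.sqrt_pos.mpr hlog
  -- rewrite the constant
  have hKF : (Real.sqrt a * Real.sqrt (2*Real.pi))⁻¹ * ((1/2:ℝ) ^ ((d:ℝ)/2) / G)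
        * (Real.Gamma b * ((1:ℝ)/((1+a)/2)) ^ b)
      = Real.Gamma b / (2 * s * (Real.sqrt Real.pi * Real.sqrt a * G)) := by
    rw [h2, h2π]
    have e1 : (Real.sqrt a * (Real.sqrt 2 * Real.sqrt Real.pi))⁻¹
          * ((1/2:ℝ) ^ ((d:ℝ)/2) / G)
          * (Real.Gamma b * ((2:ℝ) ^ b / s))
        = Real.Gamma b * ((1/2:ℝ) ^ ((d:ℝ)/2) * 2 ^ b)
            * (Real.sqrt a * Real.sqrt 2 * Real.sqrt Real.pi * G * s)⁻¹ := by
      field_simp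
    rw [e1, h3, div_eq_mul_inv, mul_assoc, ← mul_inv]
    congr 2
    linear_combination (Real.sqrt a * Real.sqrt Real.pi * G * s) * h22
  rw [hKF]
  -- key inequality
  have hgr := gamma_ratio_aux d hd
  have hsd : (0:ℝ) < Real.sqrt ((d:ℝ)-1) := Real.sqrt_pos.mpr hdpos
  have hsaLB : Real.sqrt 2 * Real.sqrt (Real.log s) / Real.sqrt ((d:ℝ)-1) ≤ Real.sqrt a := by
    have h0 := Real.sqrt_le_sqrt haLB
    rwa [Real.sqrt_div (by positivity : (0:ℝ) ≤ 2 * Real.log s),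
      Real.sqrt_mul (by norm_num : (0:ℝ) ≤ 2)] at h0
  have key : Real.sqrt (Real.log s) * Real.Gamma b ≤
      Real.sqrt Real.pi * Real.sqrt a * G := by
    calc Real.sqrt (Real.log s) * Real.Gamma b
        = Real.sqrt (Real.log s) / Real.sqrt ((d:ℝ)-1) * (Real.sqrt ((d:ℝ)-1) * Real.Gamma b) := by
          field_simp
      _ ≤ Real.sqrt (Real.log s) / Real.sqrt ((d:ℝ)-1)
            * (Real.sqrt (2*Real.pi) * G) :=
          mul_le_mul_of_nonneg_left hgr (by positivity)
      _ = Real.sqrt Real.pi * (Real.sqrt 2 * Real.sqrt (Real.log s) / Real.sqrt ((d:ℝ)-1))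
            * G := by rw [h2π]; ring
      _ ≤ Real.sqrt Real.pi * Real.sqrt a * G := by
          apply mul_le_mul_of_nonneg_right _ hGd.le
          exact mul_le_mul_of_nonneg_left hsaLB hsπ.le
  rw [div_le_div_iff₀ (by positivity) (by positivity)]
  nlinarith [mul_le_mul_of_nonneg_left key (show (0:ℝ) ≤ 2*s by positivity)]

theorem t_tail_bound {Ω : Type*} [MeasurableSpace Ω] (P : Measure Ω) [IsProbabilityMeasure P]
    (d : ℕ) (hd : 2 ≤ d) (s : ℝ) (hs : 1 < s)
    (X Y : Ω → ℝ) (hXm : Measurable X) (hYm : Measurable Y)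
    (hXY : IndepFun X Y P)
    (hX : Measure.map X P = gaussianReal 0 1)
    (hY : Measure.map Y P = gammaMeasure ((d : ℝ) / 2) (1 / 2)) :
    P {ω | Real.sqrt (Y ω * (s ^ ((2 : ℝ) / ((d : ℝ) - 1)) - 1)) ≤ X ω}
      ≤ ENNReal.ofReal (1 / (2 * s * Real.sqrt (Real.log s))) := by
  have hd2 : (2:ℝ) ≤ (d:ℝ) := by exact_mod_cast hd
  have hdpos : (0:ℝ) < (d:ℝ) - 1 := by linarith
  have hspos : (0:ℝ) < s := by linarith
  set a : ℝ := s ^ ((2 : ℝ) / ((d : ℝ) - 1)) - 1 with hadef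
  have ha : 0 < a := by
    rw [hadef, sub_pos]
    exact Real.one_lt_rpow_iff_of_pos hspos |>.mpr (Or.inl ⟨hs, by positivity⟩)
  set ν : Measure ℝ := gammaMeasure ((d : ℝ) / 2) (1 / 2) with hνdef
  set μg : Measure ℝ := gaussianReal 0 1 with hμdef
  -- Step 1: rewrite as product measure
  have hprod : P.map (fun ω => (Y ω, X ω)) = ν.prod μg := by
    rw [← hY, ← hX]
    exact (indepFun_iff_map_prod_eq_prod_map_map hYm.aemeasurable hXm.aemeasurable).mp hXY.symm
  have hSm : MeasurableSet {p : ℝ × ℝ | Real.sqrt (p.1 * a) ≤ p.2} :=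
    measurableSet_le ((measurable_fst.mul_const a).sqrt) measurable_snd
  have hEeq : P {ω | Real.sqrt (Y ω * a) ≤ X ω}
      = ∫⁻ y, μg (Ici (Real.sqrt (y * a))) ∂ν := by
    have h1 : P {ω | Real.sqrt (Y ω * a) ≤ X ω}
        = P.map (fun ω => (Y ω, X ω)) {p : ℝ × ℝ | Real.sqrt (p.1 * a) ≤ p.2} := by
      rw [Measure.map_apply (hYm.prodMk hXm) hSm]
      rfl
    rw [h1, hprod, Measure.prod_apply hSm]
    congr 1
  rw [hEeq]
  -- Step 2: bound the gaussian tail a.e.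
  have hae : ∀ᵐ y ∂ν, 0 < y := by
    rw [ae_iff]
    have hset : {y : ℝ | ¬ 0 < y} = Iic 0 := by ext y; simp
    rw [hset, hνdef, gammaMeasure, withDensity_apply _ measurableSet_Iic,
      ← Set.Iio_union_right,
      lintegral_union (measurableSet_singleton 0) (by simp)]
    rw [lintegral_gammaPDF_of_nonpos le_rfl, lintegral_singleton]
    simp
  set g : ℝ → ℝ≥0∞ := fun y =>
    ENNReal.ofReal (Real.exp (-(y*a)/2) / (Real.sqrt (y*a) * Real.sqrt (2*Real.pi))) with hgdef
  have hstep2 : ∫⁻ y, μg (Ici (Real.sqrt (y * a))) ∂ν ≤ ∫⁻ y, g y ∂ν := by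
    apply lintegral_mono_ae
    filter_upwards [hae] with y hy
    have hya : 0 < y * a := mul_pos hy ha
    have ht : 0 < Real.sqrt (y * a) := Real.sqrt_pos.mpr hya
    have := gauss_tail ht
    rwa [Real.sq_sqrt hya.le] at this
  -- Step 3: withDensity
  have hgm : Measurable g := by
    apply ENNReal.measurable_ofReal.comp
    fun_prop
  have hstep3 : ∫⁻ y, g y ∂ν = ∫⁻ y, gammaPDF ((d:ℝ)/2) (1/2) y * g y := by
    rw [hνdef, gammaMeasure]
    exact lintegral_withDensity_eq_lintegral_mul _
      ((measurable_gammaPDFReal ((d:ℝ)/2) (1/2)).ennreal_ofReal) hgm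
  -- Step 4: pointwise bound
  set K : ℝ := (Real.sqrt a * Real.sqrt (2*Real.pi))⁻¹ * ((1/2:ℝ) ^ ((d:ℝ)/2) / Real.Gamma ((d:ℝ)/2))
      * (Real.Gamma (((d:ℝ)-1)/2) * (1/((1+a)/2)) ^ (((d:ℝ)-1)/2)) with hKdef
  have hstep4 : ∀ y : ℝ, gammaPDF ((d:ℝ)/2) (1/2) y * g y
      ≤ ENNReal.ofReal K * gammaPDF (((d:ℝ)-1)/2) ((1+a)/2) y := by
    intro y
    rcases lt_trichotomy y 0 with hy | hy | hy
    · rw [gammaPDF_of_neg hy, zero_mul]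
      exact zero_le
    · subst hy
      have : g 0 = 0 := by
        rw [hgdef]
        simp
      rw [this, mul_zero]
      exact zero_le
    · have hK0 : (0:ℝ) ≤ K := by rw [hKdef]; positivity
      simp only [gammaPDF, hgdef]
      rw [← ENNReal.ofReal_mul (gammaPDFReal_nonneg (by positivity) (by norm_num) y),
        ← ENNReal.ofReal_mul hK0]
      exact ENNReal.ofReal_le_ofReal (le_of_eq (pointwise_density d hd ha hy))
  have hb : (0:ℝ) < ((d:ℝ)-1)/2 := by linarith
  have hc : (0:ℝ) < (1+a)/2 := half_pos (add_pos one_pos ha)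
  calc ∫⁻ y, μg (Ici (Real.sqrt (y * a))) ∂ν ≤ ∫⁻ y, g y ∂ν := hstep2
    _ = ∫⁻ y, gammaPDF ((d:ℝ)/2) (1/2) y * g y := hstep3
    _ ≤ ∫⁻ y, ENNReal.ofReal K * gammaPDF (((d:ℝ)-1)/2) ((1+a)/2) y :=
        lintegral_mono hstep4
    _ = ENNReal.ofReal K * ∫⁻ y, gammaPDF (((d:ℝ)-1)/2) ((1+a)/2) y :=
        lintegral_const_mul _ (measurable_gammaPDFReal _ _).ennreal_ofReal
    _ = ENNReal.ofReal K := by rw [lintegral_gammaPDF_eq_one hb hc, mul_one]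
    _ ≤ ENNReal.ofReal (1 / (2 * s * Real.sqrt (Real.log s))) :=
        ENNReal.ofReal_le_ofReal (const_bound d hd hs hadef)
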